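/- Let A ∈ ℂ^{n×n}, B ∈ ℂ^{n×m}, W, V, R as in the Riccati equation A*P + PA + W − (B*P+V)*R^{-1}(B*P+V) = 0 with R > 0, and let P = P* be a solution. Then for every ω ∈ ℝ with iω ∉ σ(A), the Popov function satisfies Φ(ω) = (I + R^{-1}(B*P+V)(iωI−A)^{-1}B)* R (I + R^{-1}(B*P+V)(iωI−A)^{-1}B); in particular Φ(ω) ≥ 0. -/

import Mathlib

open Matrix Complex
open scoped ComplexOrder

/-- The Popov (frequency) function of the pair `(A,B)` with weight `M`. -/
noncomputable def Popov {n m : ℕ} (A : Matrix (Fin n) (Fin n) ℂ) (B : Matrix (Fin n) (Fin m) ℂ)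
    (M : Matrix (Fin n ⊕ Fin m) (Fin n ⊕ Fin m) ℂ) (ω : ℝ) : Matrix (Fin m) (Fin m) ℂ :=
  (Matrix.fromRows (((Complex.I * ω) • (1 : Matrix (Fin n) (Fin n) ℂ) - A)⁻¹ * B)
      (1 : Matrix (Fin m) (Fin m) ℂ))ᴴ * M *
    Matrix.fromRows (((Complex.I * ω) • (1 : Matrix (Fin n) (Fin n) ℂ) - A)⁻¹ * B)
      (1 : Matrix (Fin m) (Fin m) ℂ)

private lemma popov_aux {n m : ℕ}
    (A : Matrix (Fin n) (Fin n) ℂ) (B : Matrix (Fin n) (Fin m) ℂ)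
    (W : Matrix (Fin n) (Fin n) ℂ) (V : Matrix (Fin m) (Fin n) ℂ)
    (R : Matrix (Fin m) (Fin m) ℂ) (hRH : Rᴴ = R) (hR1 : R * R⁻¹ = 1) (hR2 : R⁻¹ * R = 1)
    (P : Matrix (Fin n) (Fin n) ℂ) (hP : P.IsHermitian)
    (c : ℂ) (hcs : star c = -c)
    (S G : Matrix (Fin n) (Fin n) ℂ) (hS1 : S * G = 1) (hS2 : G * S = 1)
    (hA : A = c • 1 - S)
    (hRic : Aᴴ * P + P * A + W - (Bᴴ * P + V)ᴴ * R⁻¹ * (Bᴴ * P + V) = 0) :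
    (Matrix.fromRows (G * B) (1 : Matrix (Fin m) (Fin m) ℂ))ᴴ *
        Matrix.fromBlocks W Vᴴ V R *
        Matrix.fromRows (G * B) (1 : Matrix (Fin m) (Fin m) ℂ) =
      ((1 : Matrix (Fin m) (Fin m) ℂ) + R⁻¹ * (Bᴴ * P + V) * G * B)ᴴ * R *
        ((1 : Matrix (Fin m) (Fin m) ℂ) + R⁻¹ * (Bᴴ * P + V) * G * B) := by
  have hRinvH : (R⁻¹)ᴴ = R⁻¹ := by
    rw [Matrix.conjTranspose_nonsing_inv, hRH]
  have hGS : Gᴴ * Sᴴ = 1 := by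
    rw [← Matrix.conjTranspose_mul, hS1, Matrix.conjTranspose_one]
  have hAH : Aᴴ = (-c) • 1 - Sᴴ := by
    rw [hA, Matrix.conjTranspose_sub, Matrix.conjTranspose_smul, Matrix.conjTranspose_one, hcs]
  have kA : ∀ (X : Matrix (Fin n) (Fin m) ℂ), Gᴴ * (Aᴴ * X) = (-c) • (Gᴴ * X) - X := by
    intro X
    rw [hAH, Matrix.sub_mul, Matrix.smul_mul, Matrix.one_mul, Matrix.mul_sub, Matrix.mul_smul,
      ← Matrix.mul_assoc, hGS, Matrix.one_mul]
  have kB : ∀ (X : Matrix (Fin n) (Fin m) ℂ), A * (G * X) = c • (G * X) - X := by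
    intro X
    rw [hA, Matrix.sub_mul, Matrix.smul_mul, Matrix.one_mul, ← Matrix.mul_assoc, hS1,
      Matrix.one_mul]
  have hW : W = (Bᴴ * P + V)ᴴ * R⁻¹ * (Bᴴ * P + V) - (Aᴴ * P + P * A) := by
    have h := sub_eq_zero.mp hRic
    rw [← h]; abel
  have hLH : (Bᴴ * P + V)ᴴ = P * B + Vᴴ := by
    rw [Matrix.conjTranspose_add, Matrix.conjTranspose_mul,
      Matrix.conjTranspose_conjTranspose, hP.eq]
  have c1 : ∀ (X : Matrix (Fin m) (Fin m) ℂ), R * (R⁻¹ * X) = X := fun X => by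
    rw [← Matrix.mul_assoc, hR1, Matrix.one_mul]
  have c2 : ∀ (X : Matrix (Fin m) (Fin m) ℂ), R⁻¹ * (R * X) = X := fun X => by
    rw [← Matrix.mul_assoc, hR2, Matrix.one_mul]
  rw [Matrix.conjTranspose_fromRows_eq_fromCols_conjTranspose, Matrix.mul_assoc,
    Matrix.fromBlocks_mul_fromRows, Matrix.fromCols_mul_fromRows, hW]
  simp only [Matrix.conjTranspose_mul, Matrix.conjTranspose_add, Matrix.conjTranspose_one,
    hRinvH, hLH, hRH, Matrix.mul_add, Matrix.add_mul, Matrix.mul_sub, Matrix.sub_mul,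
    Matrix.mul_one, Matrix.one_mul, Matrix.mul_assoc, Matrix.smul_mul, Matrix.mul_smul,
    kA, kB, c1, c2, hR1, hR2, smul_sub, smul_smul, neg_smul, neg_mul, mul_neg,
    Matrix.neg_mul, Matrix.mul_neg, smul_add, Matrix.conjTranspose_conjTranspose, hP.eq]
  abel

theorem popov_spectral_factorization {n m : ℕ}
    (A : Matrix (Fin n) (Fin n) ℂ) (B : Matrix (Fin n) (Fin m) ℂ)
    (W : Matrix (Fin n) (Fin n) ℂ) (V : Matrix (Fin m) (Fin n) ℂ)
    (R : Matrix (Fin m) (Fin m) ℂ) (hR : R.PosDef)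
    (P : Matrix (Fin n) (Fin n) ℂ) (hP : P.IsHermitian)
    (hRic : Aᴴ * P + P * A + W - (Bᴴ * P + V)ᴴ * R⁻¹ * (Bᴴ * P + V) = 0) :
    ∀ ω : ℝ, IsUnit ((Complex.I * ω) • (1 : Matrix (Fin n) (Fin n) ℂ) - A) →
      Popov A B (Matrix.fromBlocks W Vᴴ V R) ω =
        ((1 : Matrix (Fin m) (Fin m) ℂ) +
            R⁻¹ * (Bᴴ * P + V) *
              ((Complex.I * ω) • (1 : Matrix (Fin n) (Fin n) ℂ) - A)⁻¹ * B)ᴴ * R *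
          ((1 : Matrix (Fin m) (Fin m) ℂ) +
            R⁻¹ * (Bᴴ * P + V) *
              ((Complex.I * ω) • (1 : Matrix (Fin n) (Fin n) ℂ) - A)⁻¹ * B) ∧
        (Popov A B (Matrix.fromBlocks W Vᴴ V R) ω).PosSemidef := by
  intro ω hS
  have hSdet : IsUnit ((Complex.I * ω) • (1 : Matrix (Fin n) (Fin n) ℂ) - A).det :=
    (Matrix.isUnit_iff_isUnit_det _).mp hS
  have hRdet : IsUnit R.det := (Matrix.isUnit_iff_isUnit_det _).mp hR.isUnit
  have hfact : Popov A B (Matrix.fromBlocks W Vᴴ V R) ω =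
      ((1 : Matrix (Fin m) (Fin m) ℂ) +
          R⁻¹ * (Bᴴ * P + V) *
            ((Complex.I * ω) • (1 : Matrix (Fin n) (Fin n) ℂ) - A)⁻¹ * B)ᴴ * R *
        ((1 : Matrix (Fin m) (Fin m) ℂ) +
          R⁻¹ * (Bᴴ * P + V) *
            ((Complex.I * ω) • (1 : Matrix (Fin n) (Fin n) ℂ) - A)⁻¹ * B) := by
    rw [Popov]
    exact popov_aux A B W V R hR.isHermitian (Matrix.mul_nonsing_inv R hRdet)
      (Matrix.nonsing_inv_mul R hRdet) P hP (Complex.I * ω)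
      (by simp [Complex.ext_iff])
      ((Complex.I * ω) • (1 : Matrix (Fin n) (Fin n) ℂ) - A) _
      (Matrix.mul_nonsing_inv _ hSdet) (Matrix.nonsing_inv_mul _ hSdet)
      (by abel) hRic
  exact ⟨hfact, hfact ▸ hR.posSemidef.conjTranspose_mul_mul_same _⟩
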